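/- Let n be a positive integer and p ≥ 2 a real number. Let A be an n×n random matrix whose entries are independent and uniformly distributed on {−1, +1}, and set V = n^{−1/p}·A. Then E[‖V·(1/n, …, 1/n)ᵀ‖_p] ≤ √(p/n); consequently, for any ε > 0 with n ≥ p/ε², the probability that ‖V·(1/n,…,1/n)ᵀ‖_p ≥ ε is at most √(p/(nε²)). -/

import Mathlib

open Finset

/-- The ℓ_p norm of a finite-dimensional real vector, for real `p ≥ 1`. -/
noncomputable def lpNorm {ι : Type*} [Fintype ι] (p : ℝ) (x : ι → ℝ) : ℝ :=
  (∑ j, |x j| ^ p) ^ (1 / p)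

/-- The random `±1` matrix determined by a Boolean matrix `s`. -/
noncomputable def signMatrix {n : ℕ} (s : Fin n → Fin n → Bool) : Fin n → Fin n → ℝ :=
  fun i j => if s i j then 1 else -1

lemma rpow_le_exp_aux {p t : ℝ} (hp : 0 < p) (ht : 0 < t) (a : ℝ) (ha : 0 ≤ a) :
    a ^ p ≤ (p / t) ^ p * Real.exp (t * a - p) := by
  have hu : 0 ≤ t * a / p := by positivity
  have h1 : t * a / p ≤ Real.exp (t * a / p - 1) := by
    have := Real.add_one_le_exp (t * a / p - 1); linarith
  have h2 : a = (p / t) * (t * a / p) := by field_simp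
  calc a ^ p = ((p/t) * (t*a/p)) ^ p := by rw [← h2]
    _ = (p/t)^p * (t*a/p)^p := Real.mul_rpow (by positivity) hu
    _ ≤ (p/t)^p * (Real.exp (t*a/p - 1))^p := mul_le_mul_of_nonneg_left (Real.rpow_le_rpow hu h1 hp.le) (by positivity)
    _ = (p/t)^p * Real.exp (t*a - p) := by
        rw [Real.rpow_def_of_pos (Real.exp_pos _), Real.log_exp]
        congr 1
        field_simp

lemma sum_exp_sign (n : ℕ) (t : ℝ) :
    ∑ r : Fin n → Bool, Real.exp (t * ∑ j, (if r j then (1:ℝ) else -1)) =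
      (Real.exp t + Real.exp (-t)) ^ n := by
  have h : ∀ r : Fin n → Bool, Real.exp (t * ∑ j, (if r j then (1:ℝ) else -1)) =
      ∏ j, (fun (j : Fin n) (b : Bool) => Real.exp (t * (if b then (1:ℝ) else -1))) j (r j) := by
    intro r; rw [Finset.mul_sum, Real.exp_sum]
  simp_rw [h]
  rw [← Fintype.piFinset_univ,
    ← Finset.prod_univ_sum (fun _ : Fin n => (univ : Finset Bool))
      (fun (j : Fin n) (b : Bool) => Real.exp (t * (if b then (1:ℝ) else -1)))]
  simp only [Fintype.sum_bool, if_true, if_false]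
  norm_num [mul_comm]

lemma row_bound (n : ℕ) (hn : 0 < n) (p : ℝ) (hp : 2 ≤ p) :
    ∑ r : Fin n → Bool, |∑ j, (if r j then (1:ℝ) else -1)| ^ p
      ≤ 2^n * (p * n) ^ (p/2) := by
  have hp0 : 0 < p := by linarith
  have hn0 : (0:ℝ) < n := by exact_mod_cast hn
  set t : ℝ := Real.sqrt (p / n) with htdef
  have htpos : 0 < t := Real.sqrt_pos.2 (by positivity)
  have ht2 : t ^ 2 = p / n := Real.sq_sqrt (by positivity)
  -- pointwise bound
  have key : ∀ r : Fin n → Bool,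
      |∑ j, (if r j then (1:ℝ) else -1)| ^ p ≤
      (p/t)^p * Real.exp (-p) *
        (Real.exp (t * ∑ j, (if r j then (1:ℝ) else -1)) +
         Real.exp ((-t) * ∑ j, (if r j then (1:ℝ) else -1))) := by
    intro r
    set S : ℝ := ∑ j, (if r j then (1:ℝ) else -1) with hS
    have h1 := rpow_le_exp_aux hp0 htpos |S| (abs_nonneg S)
    have h2 : Real.exp (t * |S| - p) ≤
        Real.exp (-p) * (Real.exp (t * S) + Real.exp ((-t) * S)) := by
      rw [show t * |S| - p = -p + t * |S| by ring, Real.exp_add]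
      have : Real.exp (t * |S|) ≤ Real.exp (t * S) + Real.exp ((-t) * S) := by
        rcases abs_cases S with ⟨h, _⟩ | ⟨h, _⟩
        · rw [h]; nlinarith [Real.exp_pos ((-t) * S)]
        · rw [h, show t * -S = (-t) * S by ring]
          nlinarith [Real.exp_pos (t * S)]
      nlinarith [Real.exp_pos (-p), this]
    calc |S| ^ p ≤ (p/t)^p * Real.exp (t * |S| - p) := h1
      _ ≤ (p/t)^p * (Real.exp (-p) * (Real.exp (t * S) + Real.exp ((-t) * S))) :=
          mul_le_mul_of_nonneg_left h2 (by positivity)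
      _ = (p/t)^p * Real.exp (-p) * (Real.exp (t * S) + Real.exp ((-t) * S)) := by ring
  calc ∑ r : Fin n → Bool, |∑ j, (if r j then (1:ℝ) else -1)| ^ p
      ≤ ∑ r : Fin n → Bool, (p/t)^p * Real.exp (-p) *
        (Real.exp (t * ∑ j, (if r j then (1:ℝ) else -1)) +
         Real.exp ((-t) * ∑ j, (if r j then (1:ℝ) else -1))) :=
        Finset.sum_le_sum fun r _ => key r
    _ = (p/t)^p * Real.exp (-p) *
        ((Real.exp t + Real.exp (-t))^n + (Real.exp (-t) + Real.exp (-(-t)))^n) := by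
        rw [← Finset.mul_sum, Finset.sum_add_distrib, sum_exp_sign n t, sum_exp_sign n (-t)]
    _ ≤ 2^n * (p * n) ^ (p/2) := by
        have hpt : (p / t) ^ p = (p * n) ^ (p/2) := by
          have h1 : p / t = Real.sqrt (p * n) := by
            rw [div_eq_iff htpos.ne', htdef,
              ← Real.sqrt_mul (by positivity : (0:ℝ) ≤ p * n),
              show p * (n:ℝ) * (p / n) = p ^ 2 by field_simp, Real.sqrt_sq hp0.le]
          rw [h1, Real.sqrt_eq_rpow, ← Real.rpow_mul (by positivity)]
          congr 1
          ring
        have hch : Real.exp t + Real.exp (-t) ≤ 2 * Real.exp (t^2/2) := by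
          have h := Real.cosh_le_exp_half_sq t
          rw [Real.cosh_eq] at h; linarith
        have hpow : (Real.exp t + Real.exp (-t))^n ≤ 2^n * Real.exp (p/2) := by
          calc (Real.exp t + Real.exp (-t))^n ≤ (2 * Real.exp (t^2/2))^n := by
                gcongr
            _ = 2^n * (Real.exp (t^2/2))^n := mul_pow _ _ _
            _ = 2^n * Real.exp (p/2) := by
                rw [← Real.exp_nat_mul]
                congr 1
                rw [ht2]
                field_simp
        have h2exp : 2 ≤ Real.exp (p/2) := by
          have := Real.add_one_le_exp (p/2); linarith
        have hA : (Real.exp (-t) + Real.exp (-(-t)))^n = (Real.exp t + Real.exp (-t))^n := by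
          rw [neg_neg, add_comm]
        rw [hpt, hA]
        have hX : (0:ℝ) ≤ (p*n)^(p/2) := by positivity
        have hA0 : (0:ℝ) ≤ (Real.exp t + Real.exp (-t))^n := by positivity
        have hqu : Real.exp (-p) * Real.exp (p/2) = (Real.exp (p/2))⁻¹ := by
          rw [← Real.exp_add, ← Real.exp_neg]
          congr 1
          ring
        have hinv : (Real.exp (p/2))⁻¹ ≤ 1/2 := by
          rw [inv_eq_one_div]
          apply one_div_le_one_div_of_le <;> linarith
        have h2n : (0:ℝ) < 2^n := by positivity
        calc (p*n)^(p/2) * Real.exp (-p) *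
              ((Real.exp t + Real.exp (-t))^n + (Real.exp t + Real.exp (-t))^n)
            ≤ (p*n)^(p/2) * Real.exp (-p) * (2^n * Real.exp (p/2) + 2^n * Real.exp (p/2)) := by
              have := Real.exp_pos (-p)
              gcongr
          _ = (p*n)^(p/2) * 2^n * (2 * (Real.exp (-p) * Real.exp (p/2))) := by ring
          _ = (p*n)^(p/2) * 2^n * (2 * (Real.exp (p/2))⁻¹) := by rw [hqu]
          _ ≤ (p*n)^(p/2) * 2^n * 1 := by
              have : 2 * (Real.exp (p/2))⁻¹ ≤ 1 := by linarith
              have hmul : (0:ℝ) ≤ (p*n)^(p/2) * 2^n := by positivity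
              nlinarith
          _ = 2^n * (p * n) ^ (p/2) := by ring

lemma sum_row {n : ℕ} (i : Fin n) (g : (Fin n → Bool) → ℝ) :
    ∑ s : Fin n → Fin n → Bool, g (s i) =
      ((2:ℝ)^n)^(n-1) * ∑ r : Fin n → Bool, g r := by
  rw [← Equiv.sum_comp (Equiv.funSplitAt i (Fin n → Bool)).symm (fun s => g (s i))]
  have happ : ∀ q : (Fin n → Bool) × ({j : Fin n // j ≠ i} → Fin n → Bool),
      ((Equiv.funSplitAt i (Fin n → Bool)).symm q) i = q.1 := by
    intro q
    simp [Equiv.funSplitAt, Equiv.piSplitAt]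
  simp_rw [happ]
  rw [Fintype.sum_prod_type]
  simp_rw [Finset.sum_const, Finset.card_univ]
  have hcard : (Fintype.card ({j : Fin n // j ≠ i} → Fin n → Bool)) = (2^n)^(n-1) := by
    rw [Fintype.card_fun]
    congr 1
    · rw [Fintype.card_fun]; simp
    · rw [Fintype.card_subtype_compl, Fintype.card_subtype_eq, Fintype.card_fin]
  simp_rw [nsmul_eq_mul, hcard]
  rw [← Finset.mul_sum]
  push_cast
  ring

/-- **Lemma 4.4 of the paper**: for the random matrix `V = n^{-1/p}·A` with iid uniform
`±1` entries, `E[‖V·𝟙/n‖_p] ≤ √(p/n)`, and by Markov's inequality, if `n ≥ p/ε²` then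
`P[‖V·𝟙/n‖_p ≥ ε] ≤ √(p/(nε²))`.  Expectation and probability are the uniform average
over all `2^{n²}` sign matrices. -/
theorem random_matrix_center_bound (n : ℕ) (hn : 0 < n) (p : ℝ) (hp : 2 ≤ p) :
    (∑ s : Fin n → Fin n → Bool,
        lpNorm p (fun i => (n : ℝ) ^ (-(1 / p)) * ∑ j, signMatrix s i j * (1 / (n : ℝ)))) /
      (Fintype.card (Fin n → Fin n → Bool) : ℝ) ≤ Real.sqrt (p / n) ∧
    ∀ ε : ℝ, 0 < ε → p / ε ^ 2 ≤ (n : ℝ) →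
      ((Finset.univ.filter (fun s : Fin n → Fin n → Bool =>
          ε ≤ lpNorm p (fun i =>
            (n : ℝ) ^ (-(1 / p)) * ∑ j, signMatrix s i j * (1 / (n : ℝ))))).card : ℝ) /
        (Fintype.card (Fin n → Fin n → Bool) : ℝ) ≤ Real.sqrt (p / (n * ε ^ 2)) := by
  have hp0 : 0 < p := by linarith
  have hp1 : 1 ≤ p := by linarith
  have hn0 : (0:ℝ) < n := by exact_mod_cast hn
  set F : (Fin n → Fin n → Bool) → ℝ := fun s =>
    lpNorm p (fun i => (n : ℝ) ^ (-(1 / p)) * ∑ j, signMatrix s i j * (1 / (n : ℝ))) with hFdef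
  set c : ℝ := (n:ℝ) ^ (-(1/p)) * (1/(n:ℝ)) with hcdef
  have hc0 : 0 < c := by
    apply mul_pos (Real.rpow_pos_of_pos hn0 _) (by positivity)
  set T : (Fin n → Fin n → Bool) → Fin n → ℝ :=
    fun s i => ∑ j, (if s i j then (1:ℝ) else -1) with hTdef
  set U : (Fin n → Fin n → Bool) → ℝ := fun s => ∑ i, |T s i| ^ p with hUdef
  have hU0 : ∀ s, 0 ≤ U s := by
    intro s
    exact Finset.sum_nonneg fun i _ => Real.rpow_nonneg (abs_nonneg _) _
  have hF : ∀ s, F s = (c ^ p * U s) ^ (1/p) := by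
    intro s
    rw [hFdef]
    show lpNorm p _ = _
    rw [lpNorm]
    congr 1
    rw [hUdef, Finset.mul_sum]
    apply Finset.sum_congr rfl
    intro i _
    have hx : (n : ℝ) ^ (-(1 / p)) * ∑ j, signMatrix s i j * (1 / (n : ℝ)) = c * T s i := by
      rw [hcdef, hTdef]
      simp only [signMatrix]
      rw [← Finset.sum_mul]
      ring
    rw [hx, abs_mul, abs_of_pos hc0,
      Real.mul_rpow hc0.le (abs_nonneg _)]
  have hF0 : ∀ s, 0 ≤ F s := fun s => (hF s) ▸ Real.rpow_nonneg
    (mul_nonneg (Real.rpow_nonneg hc0.le _) (hU0 s)) _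
  have hFp : ∀ s, F s ^ p = c ^ p * U s := by
    intro s
    rw [hF s, ← Real.rpow_mul (mul_nonneg (Real.rpow_nonneg hc0.le _) (hU0 s)),
      one_div_mul_cancel hp0.ne', Real.rpow_one]
  set N : ℕ := Fintype.card (Fin n → Fin n → Bool) with hNdef
  have hNval : (N:ℝ) = ((2:ℝ)^n)^n := by
    have : N = (2^n)^n := by
      rw [hNdef, Fintype.card_fun, Fintype.card_fun]
      simp
    rw [this]
    push_cast
    ring
  have hNpos : (0:ℝ) < N := by rw [hNval]; positivity
  have hw' : ∑ _s : Fin n → Fin n → Bool, (1/(N:ℝ)) = 1 := by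
    rw [Finset.sum_const, Finset.card_univ, ← hNdef, nsmul_eq_mul, mul_one_div,
      div_self hNpos.ne']
  have hjen := Real.arith_mean_le_rpow_mean Finset.univ (fun _ => 1/(N:ℝ)) F
    (fun i _ => by positivity) hw' (fun i _ => hF0 i) hp1
  have hsumU : ∑ s, U s ≤ (n:ℝ) * (((2:ℝ)^n)^(n-1) * ((2:ℝ)^n * (p*(n:ℝ))^(p/2))) := by
    have hswap : ∑ s, U s = ∑ i : Fin n, ∑ s : Fin n → Fin n → Bool, |T s i| ^ p := by
      rw [hUdef]
      exact Finset.sum_comm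
    rw [hswap]
    have hrow : ∀ i : Fin n, ∑ s : Fin n → Fin n → Bool, |T s i| ^ p
        = ((2:ℝ)^n)^(n-1) * ∑ r : Fin n → Bool, |∑ j, (if r j then (1:ℝ) else -1)| ^ p :=
      fun i => sum_row i (fun r => |∑ j, (if r j then (1:ℝ) else -1)| ^ p)
    calc ∑ i : Fin n, ∑ s : Fin n → Fin n → Bool, |T s i| ^ p
        = ∑ _i : Fin n, ((2:ℝ)^n)^(n-1) *
            ∑ r : Fin n → Bool, |∑ j, (if r j then (1:ℝ) else -1)| ^ p := by
          exact Finset.sum_congr rfl fun i _ => hrow i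
      _ ≤ ∑ _i : Fin n, ((2:ℝ)^n)^(n-1) * ((2:ℝ)^n * (p*(n:ℝ))^(p/2)) := by
          apply Finset.sum_le_sum
          intro i _
          apply mul_le_mul_of_nonneg_left _ (by positivity)
          exact row_bound n hn p hp
      _ = (n:ℝ) * (((2:ℝ)^n)^(n-1) * ((2:ℝ)^n * (p*(n:ℝ))^(p/2))) := by
          rw [Finset.sum_const, Finset.card_univ, Fintype.card_fin, nsmul_eq_mul]
  have hcp : c^p = (n:ℝ)^(-(1:ℝ)) * (n:ℝ)^(-p) := by
    rw [hcdef, Real.mul_rpow (Real.rpow_nonneg hn0.le _) (by positivity)]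
    congr 1
    · rw [← Real.rpow_mul hn0.le, show (-(1/p))*p = (-1:ℝ) by field_simp]
    · rw [one_div, ← Real.rpow_neg_one (n:ℝ), ← Real.rpow_mul hn0.le,
        show (-1:ℝ)*p = -p by ring]
  have hkey : c^p * ((n:ℝ) * (p*(n:ℝ))^(p/2)) = (p/(n:ℝ))^(p/2) := by
    have e1 : (p*(n:ℝ))^(p/2) = p^(p/2) * (n:ℝ)^(p/2) := Real.mul_rpow hp0.le hn0.le
    have e2 : (p/(n:ℝ))^(p/2) = p^(p/2) / (n:ℝ)^(p/2) := Real.div_rpow hp0.le hn0.le _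
    have e3 : (n:ℝ)^(-(1:ℝ)) * (n:ℝ) = 1 := by
      rw [Real.rpow_neg_one]
      field_simp
    have e4 : (n:ℝ)^(-p) * (n:ℝ)^(p/2) = ((n:ℝ)^(p/2))⁻¹ := by
      rw [← Real.rpow_add hn0, show -p + p/2 = -(p/2) by ring, Real.rpow_neg hn0.le]
    rw [hcp, e1, e2,
      show (n:ℝ)^(-(1:ℝ)) * (n:ℝ)^(-p) * ((n:ℝ) * (p^(p/2) * (n:ℝ)^(p/2)))
        = ((n:ℝ)^(-(1:ℝ)) * (n:ℝ)) * (p^(p/2) * ((n:ℝ)^(-p) * (n:ℝ)^(p/2))) by ring,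
      e3, e4, one_mul]
    ring
  have hNsplit : (((2:ℝ)^n)^(n-1) * (2:ℝ)^n) = (N:ℝ) := by
    rw [hNval, ← pow_succ, Nat.sub_add_cancel hn]
  have hmean : ∑ s : Fin n → Fin n → Bool, (1/(N:ℝ)) * F s ^ p ≤ (p/(n:ℝ)) ^ (p/2) := by
    calc ∑ s : Fin n → Fin n → Bool, (1/(N:ℝ)) * F s ^ p
        = (1/(N:ℝ)) * (c^p * ∑ s, U s) := by
          simp_rw [hFp]
          rw [← Finset.mul_sum, ← Finset.mul_sum]
      _ ≤ (1/(N:ℝ)) * (c^p * ((n:ℝ) * (((2:ℝ)^n)^(n-1) * ((2:ℝ)^n * (p*(n:ℝ))^(p/2))))) := by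
          have h1 : (0:ℝ) ≤ 1/(N:ℝ) := by positivity
          have h2 : (0:ℝ) ≤ c^p := Real.rpow_nonneg hc0.le _
          exact mul_le_mul_of_nonneg_left
            (mul_le_mul_of_nonneg_left hsumU h2) h1
      _ = (p/(n:ℝ)) ^ (p/2) := by
          rw [show (n:ℝ) * (((2:ℝ)^n)^(n-1) * ((2:ℝ)^n * (p*(n:ℝ))^(p/2)))
              = (((2:ℝ)^n)^(n-1) * (2:ℝ)^n) * ((n:ℝ) * (p*(n:ℝ))^(p/2)) by ring,
            hNsplit, ← hkey]
          field_simp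
  have hL : ∑ s : Fin n → Fin n → Bool, (1/(N:ℝ)) * F s = (∑ s, F s)/(N:ℝ) := by
    rw [← Finset.mul_sum, one_div, inv_mul_eq_div]
  have hsum_nonneg : (0:ℝ) ≤ ∑ s : Fin n → Fin n → Bool, (1/(N:ℝ)) * F s ^ p :=
    Finset.sum_nonneg fun s _ => mul_nonneg (by positivity) (Real.rpow_nonneg (hF0 s) p)
  have h1 : (∑ s, F s) / (N:ℝ) ≤ Real.sqrt (p/(n:ℝ)) := by
    calc (∑ s, F s) / (N:ℝ) = ∑ s : Fin n → Fin n → Bool, (1/(N:ℝ)) * F s := hL.symm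
      _ ≤ (∑ s : Fin n → Fin n → Bool, (1/(N:ℝ)) * F s ^ p) ^ (1/p) := hjen
      _ ≤ ((p/(n:ℝ)) ^ (p/2)) ^ (1/p) :=
          Real.rpow_le_rpow hsum_nonneg hmean (by positivity)
      _ = Real.sqrt (p/(n:ℝ)) := by
          rw [← Real.rpow_mul (by positivity : (0:ℝ) ≤ p/(n:ℝ)),
            show p/2*(1/p) = (1/2:ℝ) by field_simp,
            ← Real.sqrt_eq_rpow]
  refine ⟨h1, ?_⟩
  intro ε hε _
  set Sf := Finset.univ.filter (fun s : Fin n → Fin n → Bool => ε ≤ F s) with hSf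
  have hεcard : ε * (Sf.card : ℝ) ≤ ∑ s, F s := by
    calc ε * (Sf.card : ℝ) = ∑ _s ∈ Sf, ε := by
          rw [Finset.sum_const, nsmul_eq_mul]
          ring
      _ ≤ ∑ s ∈ Sf, F s := Finset.sum_le_sum fun s hs => (Finset.mem_filter.1 hs).2
      _ ≤ ∑ s, F s := Finset.sum_le_sum_of_subset_of_nonneg (Finset.filter_subset _ _)
          (fun s _ _ => hF0 s)
  have h2 : (Sf.card:ℝ) ≤ (∑ s, F s)/ε := by
    rw [le_div_iff₀ hε]
    linarith
  have hsq : Real.sqrt (p / ((n:ℝ) * ε^2)) = Real.sqrt (p/(n:ℝ)) / ε := by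
    rw [show p/((n:ℝ)*ε^2) = (p/(n:ℝ))/ε^2 by ring,
      Real.sqrt_div (by positivity) _, Real.sqrt_sq hε.le]
  rw [hsq]
  calc (Sf.card:ℝ)/(N:ℝ) ≤ ((∑ s, F s)/ε)/(N:ℝ) := by
        apply div_le_div_of_nonneg_right h2 hNpos.le
    _ = ((∑ s, F s)/(N:ℝ))/ε := by ring
    _ ≤ Real.sqrt (p/(n:ℝ)) / ε := by
        apply div_le_div_of_nonneg_right h1 hε.le
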